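/- Let M be an n×n bidiagonal matrix with diagonal a₁,...,aₙ and off-diagonal b₁,...,b_{n-1}, and let L be the 2n×2n symmetric tridiagonal matrix with zeros on the main diagonal and with a₁, b₁, a₂, b₂, ..., aₙ on the off-diagonal. If λ₁,...,λₙ are the singular values of M, then the eigenvalues of L are exactly ±λᵢ, i = 1,...,n (with multiplicity). -/

import Mathlib

open Polynomial Matrix

/-- Perfect shuffle equivalence: `inl k ↦ 2k`, `inr k ↦ 2k+1`. -/
def shuffle (n : ℕ) : (Fin n ⊕ Fin n) ≃ Fin (2 * n) where
  toFun x := Sum.elim (fun k : Fin n => (⟨2 * k, by have := k.isLt; omega⟩ : Fin (2 * n)))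
    (fun k : Fin n => (⟨2 * k + 1, by have := k.isLt; omega⟩ : Fin (2 * n))) x
  invFun i := if (i : ℕ) % 2 = 0 then Sum.inl ⟨(i : ℕ) / 2, by have := i.isLt; omega⟩
    else Sum.inr ⟨(i : ℕ) / 2, by have := i.isLt; omega⟩
  left_inv x := by
    rcases x with k | k
    · simp only [Sum.elim_inl]
      refine (if_pos (show 2 * (k : ℕ) % 2 = 0 by omega)).trans ?_
      congr 1
      apply Fin.ext
      show 2 * (k : ℕ) / 2 = k
      omega
    · simp only [Sum.elim_inr]
      refine (if_neg (show ¬ (2 * (k : ℕ) + 1) % 2 = 0 by omega)).trans ?_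
      congr 1
      apply Fin.ext
      show (2 * (k : ℕ) + 1) / 2 = k
      omega
  right_inv i := by
    dsimp only
    by_cases h : (i : ℕ) % 2 = 0
    · rw [if_pos h]
      simp only [Sum.elim_inl]
      apply Fin.ext
      show 2 * ((i : ℕ) / 2) = i
      omega
    · rw [if_neg h]
      simp only [Sum.elim_inr]
      apply Fin.ext
      show 2 * ((i : ℕ) / 2) + 1 = i
      omega

lemma shuffle_inl {n : ℕ} (k : Fin n) : ((shuffle n (Sum.inl k) : Fin (2 * n)) : ℕ) = 2 * k := rfl

lemma shuffle_inr {n : ℕ} (k : Fin n) :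
    ((shuffle n (Sum.inr k) : Fin (2 * n)) : ℕ) = 2 * k + 1 := rfl

theorem bidiagonal_doubling (n : ℕ) (a b : ℕ → ℝ)
    (M : Matrix (Fin n) (Fin n) ℝ)
    (hM : ∀ i j : Fin n, M i j =
      if (i : ℕ) = j then a i else if (j : ℕ) = (i : ℕ) + 1 then b i else 0)
    (L : Matrix (Fin (2 * n)) (Fin (2 * n)) ℝ)
    (hL : ∀ i j : Fin (2 * n), L i j =
      if (i : ℕ) + 1 = j ∨ (j : ℕ) + 1 = i then
        (if (min (i : ℕ) (j : ℕ)) % 2 = 0 then a ((min (i : ℕ) (j : ℕ)) / 2)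
         else b ((min (i : ℕ) (j : ℕ)) / 2))
      else 0)
    (lam : Fin n → ℝ) (hlam : ∀ i, 0 ≤ lam i)
    (hsing : (Mᵀ * M).charpoly = ∏ i, (X - C ((lam i) ^ 2))) :
    L.charpoly = ∏ i, ((X - C (lam i)) * (X + C (lam i))) := by
  classical
  -- Step 1: L is a reindexing of the block matrix [[0, Mᵀ], [M, 0]].
  have hre : reindex (shuffle n).symm (shuffle n).symm L
      = fromBlocks (0 : Matrix (Fin n) (Fin n) ℝ) Mᵀ M 0 := by
    ext x y
    rcases x with i | i <;> rcases y with j | j <;>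
      simp only [reindex_apply, submatrix_apply, Equiv.symm_symm, fromBlocks_apply₁₁,
        fromBlocks_apply₁₂, fromBlocks_apply₂₁, fromBlocks_apply₂₂, transpose_apply,
        Matrix.zero_apply] <;>
      rw [hL] <;>
      simp only [shuffle_inl, shuffle_inr]
    · exact if_neg (show ¬(2 * (i : ℕ) + 1 = 2 * j ∨ 2 * (j : ℕ) + 1 = 2 * i) by omega)
    · rw [hM]
      show (if 2 * (i : ℕ) + 1 = 2 * j + 1 ∨ 2 * (j : ℕ) + 1 + 1 = 2 * i then
        (if min (2 * (i : ℕ)) (2 * j + 1) % 2 = 0 then _ else _) else _) = _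
      split_ifs <;> first | rfl | (congr 1; omega) | (exfalso; omega)
    · rw [hM]
      show (if 2 * (i : ℕ) + 1 + 1 = 2 * j ∨ 2 * (j : ℕ) + 1 = 2 * i + 1 then
        (if min (2 * (i : ℕ) + 1) (2 * j) % 2 = 0 then _ else _) else _) = _
      split_ifs <;> first | rfl | (congr 1; omega) | (exfalso; omega)
    · exact if_neg (show ¬(2 * (i : ℕ) + 1 + 1 = 2 * j + 1 ∨ 2 * (j : ℕ) + 1 + 1 = 2 * i + 1) by omega)
  have h1 : L.charpoly = (fromBlocks (0 : Matrix (Fin n) (Fin n) ℝ) Mᵀ M 0).charpoly := by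
    rw [← hre, charpoly_reindex]
  -- Step 2: charmatrix of the block matrix
  have hcm : charmatrix (fromBlocks (0 : Matrix (Fin n) (Fin n) ℝ) Mᵀ M 0)
      = fromBlocks (Matrix.scalar (Fin n) (X : ℝ[X])) (-(Mᵀ.map C)) (-(M.map C))
          (Matrix.scalar (Fin n) (X : ℝ[X])) := by
    rw [charmatrix_fromBlocks]
    have h0 : charmatrix (0 : Matrix (Fin n) (Fin n) ℝ) = Matrix.scalar (Fin n) (X : ℝ[X]) := by
      unfold charmatrix
      simp
    rw [h0]
  -- the auxiliary block matrix
  set Q : Matrix (Fin n ⊕ Fin n) (Fin n ⊕ Fin n) ℝ[X] :=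
    fromBlocks (Matrix.scalar (Fin n) (X : ℝ[X])) 0 (M.map C) 1 with hQ
  have hmul : charmatrix (fromBlocks (0 : Matrix (Fin n) (Fin n) ℝ) Mᵀ M 0) * Q
      = fromBlocks (Matrix.scalar (Fin n) ((X : ℝ[X]) ^ 2) - (Mᵀ * M).map C)
          (-(Mᵀ.map C)) 0 (Matrix.scalar (Fin n) (X : ℝ[X])) := by
    have e11 : Matrix.scalar (Fin n) (X : ℝ[X]) * Matrix.scalar (Fin n) (X : ℝ[X])
        + -(Mᵀ.map C) * M.map C
        = Matrix.scalar (Fin n) ((X : ℝ[X]) ^ 2) - (Mᵀ * M).map C := by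
      rw [← map_mul (Matrix.scalar (Fin n)), ← sq, neg_mul, ← Matrix.map_mul,
        ← sub_eq_add_neg]
    have e12 : Matrix.scalar (Fin n) (X : ℝ[X]) * 0 + -(Mᵀ.map C) * 1 = -(Mᵀ.map C) := by simp
    have e21 : -(M.map C) * Matrix.scalar (Fin n) (X : ℝ[X])
        + Matrix.scalar (Fin n) (X : ℝ[X]) * M.map C = 0 := by
      rw [(Matrix.scalar_commute (X : ℝ[X]) (Commute.all X) (M.map C)).eq, neg_mul,
        neg_add_cancel]
    have e22 : -(M.map C) * 0 + Matrix.scalar (Fin n) (X : ℝ[X]) * 1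
        = Matrix.scalar (Fin n) (X : ℝ[X]) := by simp
    rw [hcm, hQ, fromBlocks_multiply, e11, e12, e21, e22]
  have hdetS : (Matrix.scalar (Fin n) (X : ℝ[X])).det = X ^ n := by
    simp [Matrix.scalar_apply, Matrix.det_diagonal]
  have hdet : (fromBlocks (0 : Matrix (Fin n) (Fin n) ℝ) Mᵀ M 0).charpoly * X ^ n
      = (Matrix.scalar (Fin n) ((X : ℝ[X]) ^ 2) - (Mᵀ * M).map C).det * X ^ n := by
    have h := congrArg Matrix.det hmul
    rw [det_mul, hQ, det_fromBlocks_zero₁₂, det_fromBlocks_zero₂₁, hdetS, det_one, mul_one] at h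
    simpa [Matrix.charpoly] using h
  -- Step 3: the substitution X ↦ X²
  set φ : ℝ[X] →+* ℝ[X] := eval₂RingHom C (X ^ 2) with hφ
  have hφC : ∀ r : ℝ, φ (C r) = C r := fun r => eval₂_C _ _
  have hφX : φ X = X ^ 2 := eval₂_X _ _
  have hmap : (charmatrix (Mᵀ * M)).map φ
      = Matrix.scalar (Fin n) ((X : ℝ[X]) ^ 2) - (Mᵀ * M).map C := by
    ext i j : 2
    rw [Matrix.map_apply, Matrix.sub_apply, Matrix.map_apply, Matrix.scalar_apply]
    by_cases h : i = j
    · subst h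
      rw [charmatrix_apply_eq, map_sub, hφX, hφC, Matrix.diagonal_apply_eq]
    · rw [charmatrix_apply_ne _ _ _ h, map_neg, hφC, Matrix.diagonal_apply_ne _ h, zero_sub]
  have hφdet : φ ((Mᵀ * M).charpoly)
      = (Matrix.scalar (Fin n) ((X : ℝ[X]) ^ 2) - (Mᵀ * M).map C).det := by
    rw [Matrix.charpoly, RingHom.map_det, RingHom.mapMatrix_apply, hmap]
  have hφprod : φ ((Mᵀ * M).charpoly) = ∏ i, ((X - C (lam i)) * (X + C (lam i))) := by
    rw [hsing, map_prod]
    refine Finset.prod_congr rfl fun i _ => ?_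
    rw [map_sub, hφX, hφC, C_pow]
    ring
  -- conclude
  have hcancel : L.charpoly * X ^ n = (∏ i, ((X - C (lam i)) * (X + C (lam i)))) * X ^ n := by
    rw [h1, hdet, ← hφdet, hφprod]
  exact mul_right_cancel₀ (pow_ne_zero n Polynomial.X_ne_zero) hcancel
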